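/- arXiv:math/0606434 — 2 statements merged into one kernel-verified Lean document; each statement's English description precedes it below -/
import Mathlib

section
/- Let χ̂_n ∈ 𝓢(ℝᵈ) be an approximate identity family: χ̂_n(x) = 2^{dn} χ̂(2^n x) where χ̂ ∈ 𝓢(ℝᵈ) with ∫ χ̂ = 1. Let 𝓣 : ℝᵈ → ℝᵈ be a C¹ diffeomorphism, G ∈ C⁰_0(ℝᵈ), and suppose x₀ is the unique fixed point of 𝓣 in supp(G) and that Id − D𝓣(x₀) is invertible. Then lim_{n→∞} ∫ χ̂_n(𝓣(x) − x) G(x) dx = G(x₀)/|det(Id − D𝓣(x₀))|. -/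
open MeasureTheory

set_option maxHeartbeats 1000000 in
/-- for a Schwartz approximate identity `χ̂_n(x) = 2^{dn} χ̂(2^n x)` with
`∫ χ̂ = 1`, a `C¹` diffeomorphism `𝓣` with unique fixed point `x₀` of `𝓣` in `supp G`
and `Id − D𝓣(x₀)` invertible,
`lim_n ∫ χ̂_n(𝓣(x) − x) G(x) dx = G(x₀)/|det(Id − D𝓣(x₀))|`. -/
theorem stmt17 {d : ℕ} (hd : 0 < d)
    (χhat : SchwartzMap (EuclideanSpace ℝ (Fin d)) ℝ)
    (hχ : ∫ x, χhat x = 1)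
    (𝓣 : EuclideanSpace ℝ (Fin d) → EuclideanSpace ℝ (Fin d))
    (D𝓣 : EuclideanSpace ℝ (Fin d) →
      (EuclideanSpace ℝ (Fin d) →L[ℝ] EuclideanSpace ℝ (Fin d)))
    (hD : ∀ x, HasFDerivAt 𝓣 (D𝓣 x) x) (hDc : Continuous D𝓣)
    (hbij : Function.Bijective 𝓣)
    (G : EuclideanSpace ℝ (Fin d) → ℝ) (hG : Continuous G)
    (hGsupp : HasCompactSupport G)
    (x₀ : EuclideanSpace ℝ (Fin d)) (hx₀ : x₀ ∈ tsupport G) (hfix : 𝓣 x₀ = x₀)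
    (huniq : ∀ x ∈ tsupport G, 𝓣 x = x → x = x₀)
    (hinv : ((1 : EuclideanSpace ℝ (Fin d) →L[ℝ] EuclideanSpace ℝ (Fin d))
        - D𝓣 x₀).det ≠ 0) :
    Filter.Tendsto
      (fun n : ℕ => ∫ x, (2 : ℝ) ^ (d * n) * χhat ((2 : ℝ) ^ n • (𝓣 x - x)) * G x)
      Filter.atTop
      (nhds (G x₀ /
        |((1 : EuclideanSpace ℝ (Fin d) →L[ℝ] EuclideanSpace ℝ (Fin d))
          - D𝓣 x₀).det|)) := by
  set F : EuclideanSpace ℝ (Fin d) → EuclideanSpace ℝ (Fin d) := fun x => 𝓣 x - x with hF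
  set A : EuclideanSpace ℝ (Fin d) →
      (EuclideanSpace ℝ (Fin d) →L[ℝ] EuclideanSpace ℝ (Fin d)) := fun x => D𝓣 x - 1 with hA
  have hFd : ∀ x, HasFDerivAt F (A x) x := fun x => (hD x).sub (hasFDerivAt_id x)
  have hAc : Continuous A := hDc.sub continuous_const
  have hdetc : Continuous fun x => (A x).det := ContinuousLinearMap.continuous_det.comp hAc
  have hdetrel : (A x₀).det = (-1 : ℝ) ^ d * ((1 : EuclideanSpace ℝ (Fin d) →L[ℝ]
      EuclideanSpace ℝ (Fin d)) - D𝓣 x₀).det := by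
    have h1 : (A x₀ : EuclideanSpace ℝ (Fin d) →ₗ[ℝ] EuclideanSpace ℝ (Fin d))
        = (-1 : ℝ) • (((1 : EuclideanSpace ℝ (Fin d) →L[ℝ] EuclideanSpace ℝ (Fin d)) - D𝓣 x₀ :
          EuclideanSpace ℝ (Fin d) →L[ℝ] EuclideanSpace ℝ (Fin d)) :
          EuclideanSpace ℝ (Fin d) →ₗ[ℝ] EuclideanSpace ℝ (Fin d)) := by
      ext v; simp [hA]
    show LinearMap.det _ = _
    rw [h1, LinearMap.det_smul]
    rw [finrank_euclideanSpace, Fintype.card_fin]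
  have hdet0 : (A x₀).det ≠ 0 := by
    rw [hdetrel]
    exact mul_ne_zero (pow_ne_zero _ (by norm_num)) hinv
  have habs : |(A x₀).det| = |((1 : EuclideanSpace ℝ (Fin d) →L[ℝ]
      EuclideanSpace ℝ (Fin d)) - D𝓣 x₀).det| := by
    rw [hdetrel, abs_mul, abs_pow, abs_neg, abs_one, one_pow, one_mul]
  have hFx₀ : F x₀ = 0 := by simp [hF, hfix]
  -- strict derivative and local inverse
  set A' : EuclideanSpace ℝ (Fin d) ≃L[ℝ] EuclideanSpace ℝ (Fin d) :=
    (A x₀).toContinuousLinearEquivOfDetNeZero hdet0 with hA'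
  have hstrict : HasStrictFDerivAt F
      (A' : EuclideanSpace ℝ (Fin d) →L[ℝ] EuclideanSpace ℝ (Fin d)) x₀ := by
    rw [hA']
    rw [ContinuousLinearMap.coe_toContinuousLinearEquivOfDetNeZero]
    exact hasStrictFDerivAt_of_hasFDerivAt_of_continuousAt
      (Filter.Eventually.of_forall fun y => hFd y) (hAc.continuousAt)
  set e := hstrict.toOpenPartialHomeomorph F with he
  have hecoe : (e : EuclideanSpace ℝ (Fin d) → EuclideanSpace ℝ (Fin d)) = F :=
    hstrict.toOpenPartialHomeomorph_coe
  have hx₀src : x₀ ∈ e.source := hstrict.mem_toOpenPartialHomeomorph_source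
  -- choose a small closed ball around x₀
  obtain ⟨r, hr, hrsub⟩ : ∃ r > 0, Metric.closedBall x₀ r ⊆
      e.source ∩ {x | (A x).det ≠ 0} := by
    have hopen : IsOpen (e.source ∩ {x | (A x).det ≠ 0}) :=
      e.open_source.inter (isOpen_ne.preimage hdetc)
    have hmem : x₀ ∈ e.source ∩ {x | (A x).det ≠ 0} := ⟨hx₀src, hdet0⟩
    rcases Metric.nhds_basis_closedBall.mem_iff.1 (hopen.mem_nhds hmem) with ⟨r, hr, hsub⟩
    exact ⟨r, hr, hsub⟩
  set U : Set (EuclideanSpace ℝ (Fin d)) := Metric.ball x₀ r with hU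
  have hUsrc : U ⊆ e.source := fun x hx => (hrsub (Metric.ball_subset_closedBall hx)).1
  have hUdet : ∀ x ∈ Metric.closedBall x₀ r, (A x).det ≠ 0 :=
    fun x hx => (hrsub hx).2
  have hx₀U : x₀ ∈ U := Metric.mem_ball_self hr
  -- lower bound for |det A| on the closed ball
  obtain ⟨δ, hδ, hδle⟩ : ∃ δ > 0, ∀ x ∈ Metric.closedBall x₀ r, δ ≤ |(A x).det| := by
    obtain ⟨x₁, hx₁, hx₁min⟩ := (isCompact_closedBall x₀ r).exists_isMinOn
      ⟨x₀, Metric.mem_closedBall_self hr.le⟩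
      ((continuous_abs.comp hdetc).continuousOn)
    exact ⟨|(A x₁).det|, abs_pos.2 (hUdet x₁ hx₁), fun x hx => hx₁min hx⟩
  -- bound for G
  obtain ⟨Cg, hCg⟩ := hGsupp.exists_bound_of_continuous hG
  have hCg0 : 0 ≤ Cg := le_trans (norm_nonneg _) (hCg x₀)
  -- the image set V and the density H
  set V : Set (EuclideanSpace ℝ (Fin d)) := F '' U with hV
  have hVopen : IsOpen V := by
    rw [hV, ← hecoe]
    exact e.isOpen_image_of_subset_source Metric.isOpen_ball hUsrc
  have h0V : (0 : EuclideanSpace ℝ (Fin d)) ∈ V := ⟨x₀, hx₀U, hFx₀⟩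
  have hsymmF : ∀ x ∈ U, e.symm (F x) = x := by
    intro x hx
    rw [← hecoe]
    exact e.left_inv (hUsrc hx)
  have hsymmV : ∀ z ∈ V, e.symm z ∈ U ∧ F (e.symm z) = z := by
    rintro z ⟨x, hx, rfl⟩
    rw [hsymmF x hx]
    exact ⟨hx, rfl⟩
  set H : EuclideanSpace ℝ (Fin d) → ℝ :=
    Set.indicator V (fun z => G (e.symm z) / |(A (e.symm z)).det|) with hH
  have hHbound : ∀ z, |H z| ≤ Cg / δ := by
    intro z
    rw [hH]
    by_cases hz : z ∈ V
    · rw [Set.indicator_of_mem hz]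
      rcases hsymmV z hz with ⟨hzU, -⟩
      have h1 : δ ≤ |(A (e.symm z)).det| := hδle _ (Metric.ball_subset_closedBall hzU)
      rw [abs_div, abs_abs]
      exact div_le_div₀ (by positivity) (hCg _) hδ h1
    · rw [Set.indicator_of_notMem hz]
      simpa using div_nonneg hCg0 hδ.le
  have hsymm0 : e.symm 0 = x₀ := by
    have := hsymmF x₀ hx₀U
    rwa [hFx₀] at this
  have hH0 : H 0 = G x₀ / |(A x₀).det| := by
    rw [hH, Set.indicator_of_mem h0V, hsymm0]
  have hVtarget : V ⊆ e.target := by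
    rw [hV, ← hecoe, ← e.image_source_eq_target]
    exact Set.image_mono hUsrc
  have hHcontat : ContinuousAt H 0 := by
    have hcongr : ∀ᶠ z in nhds 0, H z
        = G (e.symm z) / |(A (e.symm z)).det| := by
      filter_upwards [hVopen.mem_nhds h0V] with z hz
      rw [hH, Set.indicator_of_mem hz]
    have hsymmct : ContinuousAt e.symm 0 := e.continuousAt_symm (hVtarget h0V)
    have : ContinuousAt (fun z => G (e.symm z) / |(A (e.symm z)).det|) 0 := by
      apply ContinuousAt.div
      · exact hG.continuousAt.comp hsymmct
      · exact (continuous_abs.comp hdetc).continuousAt.comp hsymmct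
      · rw [hsymm0]
        simpa using hdet0
    exact this.congr (by filter_upwards [hcongr] with z hz using hz.symm)
  have hHmeas : AEStronglyMeasurable H (volume :
      Measure (EuclideanSpace ℝ (Fin d))) := by
    rw [hH, aestronglyMeasurable_indicator_iff hVopen.measurableSet]
    apply ContinuousOn.aestronglyMeasurable _ hVopen.measurableSet
    apply ContinuousOn.div
    · exact hG.comp_continuousOn (e.continuousOn_symm.mono hVtarget)
    · exact (continuous_abs.comp hdetc).comp_continuousOn
        (e.continuousOn_symm.mono hVtarget)
    · intro z hz
      have := hUdet _ (Metric.ball_subset_closedBall (hsymmV z hz).1)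
      simpa using this
  -- continuity of 𝓣 and integrability of the integrand
  have h𝓣c : Continuous 𝓣 := continuous_iff_continuousAt.2 fun x => (hD x).continuousAt
  have hFc : Continuous F := h𝓣c.sub continuous_id
  have hcont : ∀ n : ℕ, Continuous fun x =>
      (2 : ℝ) ^ (d * n) * χhat ((2 : ℝ) ^ n • F x) * G x := by
    intro n
    exact (continuous_const.mul (χhat.continuous.comp (hFc.const_smul ((2 : ℝ) ^ n)))).mul hG
  have hsupp : ∀ n : ℕ, HasCompactSupport fun x =>
      (2 : ℝ) ^ (d * n) * χhat ((2 : ℝ) ^ n • F x) * G x := fun n => hGsupp.mul_left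
  have hint : ∀ n : ℕ, Integrable (fun x =>
      (2 : ℝ) ^ (d * n) * χhat ((2 : ℝ) ^ n • F x) * G x) volume :=
    fun n => (hcont n).integrable_of_hasCompactSupport (hsupp n)
  -- change of variables on U
  have hinjU : Set.InjOn F U := by
    rw [← hecoe]
    exact e.injOn.mono hUsrc
  have stepA : ∀ n : ℕ, (∫ x in U, (2 : ℝ) ^ (d * n) * χhat ((2 : ℝ) ^ n • F x) * G x)
      = ∫ z, (2 : ℝ) ^ (d * n) * χhat ((2 : ℝ) ^ n • z) * H z := by
    intro n
    have hcov := integral_image_eq_integral_abs_det_fderiv_smul volume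
      Metric.isOpen_ball.measurableSet
      (fun x (_ : x ∈ U) => (hFd x).hasFDerivWithinAt) hinjU
      (fun z => (2 : ℝ) ^ (d * n) * χhat ((2 : ℝ) ^ n • z) * H z)
    have hrhs : (∫ x in U, |(A x).det| •
        ((2 : ℝ) ^ (d * n) * χhat ((2 : ℝ) ^ n • F x) * H (F x)))
        = ∫ x in U, (2 : ℝ) ^ (d * n) * χhat ((2 : ℝ) ^ n • F x) * G x := by
      apply setIntegral_congr_fun Metric.isOpen_ball.measurableSet
      intro x hx
      have hdx : (A x).det ≠ 0 := hUdet x (Metric.ball_subset_closedBall hx)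
      have hFxV : F x ∈ V := ⟨x, hx, rfl⟩
      have : H (F x) = G x / |(A x).det| := by
        rw [hH, Set.indicator_of_mem hFxV, hsymmF x hx]
      simp only [this, smul_eq_mul]
      field_simp
    have hlhs : (∫ z in V, (2 : ℝ) ^ (d * n) * χhat ((2 : ℝ) ^ n • z) * H z)
        = ∫ z, (2 : ℝ) ^ (d * n) * χhat ((2 : ℝ) ^ n • z) * H z := by
      apply setIntegral_eq_integral_of_forall_compl_eq_zero
      intro z hz
      rw [hH, Set.indicator_of_notMem hz, mul_zero]
    rw [← hlhs, hV, hcov, hrhs]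
  -- substitution z = 2⁻ⁿ y
  have stepC : ∀ n : ℕ, (∫ z, (2 : ℝ) ^ (d * n) * χhat ((2 : ℝ) ^ n • z) * H z)
      = ∫ y, χhat y * H (((2 : ℝ) ^ n)⁻¹ • y) := by
    intro n
    have h2n : ((2 : ℝ) ^ n) ≠ 0 := by positivity
    have hsub := Measure.integral_comp_smul volume
      (fun y => χhat y * H (((2 : ℝ) ^ n)⁻¹ • y)) ((2 : ℝ) ^ n)
    have heq : (fun z => χhat ((2 : ℝ) ^ n • z) * H (((2 : ℝ) ^ n)⁻¹ • (2 : ℝ) ^ n • z))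
        = fun z => χhat ((2 : ℝ) ^ n • z) * H z := by
      funext z
      rw [smul_smul, inv_mul_cancel₀ h2n, one_smul]
    rw [heq] at hsub
    have hpull : (∫ z, (2 : ℝ) ^ (d * n) * χhat ((2 : ℝ) ^ n • z) * H z)
        = (2 : ℝ) ^ (d * n) * ∫ z, χhat ((2 : ℝ) ^ n • z) * H z := by
      simp_rw [mul_assoc]
      exact integral_const_mul _ _
    rw [hpull, hsub, finrank_euclideanSpace, Fintype.card_fin, smul_eq_mul, ← mul_assoc]
    have : (2 : ℝ) ^ (d * n) * |(((2 : ℝ) ^ n) ^ d)⁻¹| = 1 := by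
      rw [abs_of_pos (by positivity), ← pow_mul, mul_comm n d]
      field_simp
    rw [this, one_mul]
  -- Step D: dominated convergence for the inner part
  have qmp : ∀ n : ℕ, Measure.QuasiMeasurePreserving
      (fun y : EuclideanSpace ℝ (Fin d) => ((2 : ℝ) ^ n)⁻¹ • y) volume volume := by
    intro n
    refine ⟨measurable_const_smul _, ?_⟩
    rw [Measure.map_addHaar_smul volume (by positivity : ((2 : ℝ) ^ n)⁻¹ ≠ 0)]
    exact Measure.smul_absolutelyContinuous
  have hsmul0 : ∀ y : EuclideanSpace ℝ (Fin d),
      Filter.Tendsto (fun n : ℕ => ((2 : ℝ) ^ n)⁻¹ • y) Filter.atTop (nhds 0) := by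
    intro y
    have h1 : Filter.Tendsto (fun n : ℕ => ((2 : ℝ) ^ n)⁻¹) Filter.atTop (nhds 0) :=
      tendsto_inv_atTop_zero.comp (tendsto_pow_atTop_atTop_of_one_lt one_lt_two)
    have h2 := h1.smul_const y
    rwa [zero_smul] at h2
  have stepD : Filter.Tendsto (fun n : ℕ => ∫ y, χhat y * H (((2 : ℝ) ^ n)⁻¹ • y))
      Filter.atTop (nhds (G x₀ / |((1 : EuclideanSpace ℝ (Fin d) →L[ℝ]
        EuclideanSpace ℝ (Fin d)) - D𝓣 x₀).det|)) := by
    have hlim : Filter.Tendsto (fun n : ℕ => ∫ y, χhat y * H (((2 : ℝ) ^ n)⁻¹ • y))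
        Filter.atTop (nhds (∫ y, χhat y * H 0)) := by
      apply tendsto_integral_of_dominated_convergence (fun y => ‖χhat y‖ * (Cg / δ))
      · intro n
        exact χhat.continuous.aestronglyMeasurable.mul
          (hHmeas.comp_quasiMeasurePreserving (qmp n))
      · exact χhat.integrable.norm.mul_const _
      · intro n
        filter_upwards with y
        rw [norm_mul]
        refine mul_le_mul_of_nonneg_left ?_ (norm_nonneg _)
        exact hHbound _
      · filter_upwards with y
        exact Filter.Tendsto.const_mul _ (hHcontat.tendsto.comp (hsmul0 y))
    have hval : (∫ y, χhat y * H 0) = G x₀ / |((1 : EuclideanSpace ℝ (Fin d) →L[ℝ]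
        EuclideanSpace ℝ (Fin d)) - D𝓣 x₀).det| := by
      rw [integral_mul_const, hχ, one_mul, hH0, habs]
    rwa [hval] at hlim
  -- Step E: outer part tends to zero
  set C : Set (EuclideanSpace ℝ (Fin d)) := tsupport G \ U with hC
  have hCcompact : IsCompact C := hGsupp.diff Metric.isOpen_ball
  have hCne : ∀ x ∈ C, F x ≠ 0 := by
    rintro x ⟨hx1, hx2⟩ hx0
    have : 𝓣 x = x := by
      have := sub_eq_zero.1 hx0
      exact this
    exact hx2 (huniq x hx1 this ▸ hx₀U)
  obtain ⟨ε, hε, hεle⟩ : ∃ ε > 0, ∀ x ∈ C, ε ≤ ‖F x‖ := by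
    rcases C.eq_empty_or_nonempty with hemp | hne
    · exact ⟨1, one_pos, by simp [hemp]⟩
    · obtain ⟨x₁, hx₁, hx₁min⟩ := hCcompact.exists_isMinOn hne (hFc.norm.continuousOn)
      exact ⟨‖F x₁‖, norm_pos_iff.2 (hCne x₁ hx₁), fun x hx => hx₁min hx⟩
  set Cχ : ℝ := SchwartzMap.seminorm ℝ (d + 1) 0 χhat with hCχdef
  have hCχ : ∀ y : EuclideanSpace ℝ (Fin d), ‖y‖ ^ (d + 1) * ‖χhat y‖ ≤ Cχ :=
    fun y => SchwartzMap.norm_pow_mul_le_seminorm ℝ χhat (d+1) y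
  have hCχ0 : 0 ≤ Cχ := apply_nonneg _ _
  have hMfin : volume (Uᶜ ∩ tsupport G) < ⊤ :=
    lt_of_le_of_lt (measure_mono Set.inter_subset_right) hGsupp.measure_lt_top
  set M : ℝ := (volume (Uᶜ ∩ tsupport G)).toReal with hM
  have hM0 : 0 ≤ M := ENNReal.toReal_nonneg
  have hKbound : ∀ n : ℕ, ‖∫ x in Uᶜ, (2 : ℝ) ^ (d * n) * χhat ((2 : ℝ) ^ n • F x) * G x‖
      ≤ (2 : ℝ) ^ (d * n) * (Cχ / ((2 : ℝ) ^ n * ε) ^ (d + 1)) * Cg * M := by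
    intro n
    have heq : (∫ x in Uᶜ, (2 : ℝ) ^ (d * n) * χhat ((2 : ℝ) ^ n • F x) * G x)
        = ∫ x in Uᶜ ∩ tsupport G, (2 : ℝ) ^ (d * n) * χhat ((2 : ℝ) ^ n • F x) * G x := by
      rw [← setIntegral_indicator (isClosed_tsupport G).measurableSet]
      apply setIntegral_congr_fun measurableSet_ball.compl
      intro x _
      by_cases hx : x ∈ tsupport G
      · simp only [Set.indicator_of_mem hx]
      · simp only [Set.indicator_of_notMem hx, image_eq_zero_of_notMem_tsupport hx, mul_zero]
    rw [heq]
    apply norm_setIntegral_le_of_norm_le_const hMfin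
    intro x hx
    have hxC : x ∈ C := ⟨hx.2, fun h => hx.1 h⟩
    have hFx : ε ≤ ‖F x‖ := hεle x hxC
    have hnorm : (2 : ℝ) ^ n * ε ≤ ‖(2 : ℝ) ^ n • F x‖ := by
      rw [norm_smul, Real.norm_eq_abs, abs_of_pos (by positivity : (0:ℝ) < (2:ℝ)^n)]
      exact mul_le_mul_of_nonneg_left hFx (by positivity)
    have hpos : (0 : ℝ) < (2 : ℝ) ^ n * ε := by positivity
    have hχle : ‖χhat ((2 : ℝ) ^ n • F x)‖ ≤ Cχ / ((2 : ℝ) ^ n * ε) ^ (d + 1) := by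
      have h1 := hCχ ((2 : ℝ) ^ n • F x)
      have h2 : ((2 : ℝ) ^ n * ε) ^ (d + 1) * ‖χhat ((2 : ℝ) ^ n • F x)‖
          ≤ ‖(2 : ℝ) ^ n • F x‖ ^ (d + 1) * ‖χhat ((2 : ℝ) ^ n • F x)‖ :=
        mul_le_mul_of_nonneg_right (pow_le_pow_left₀ hpos.le hnorm _) (norm_nonneg _)
      rw [le_div_iff₀ (by positivity), mul_comm]
      exact h2.trans h1
    calc ‖(2 : ℝ) ^ (d * n) * χhat ((2 : ℝ) ^ n • F x) * G x‖
        = (2 : ℝ) ^ (d * n) * ‖χhat ((2 : ℝ) ^ n • F x)‖ * ‖G x‖ := by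
          rw [norm_mul, norm_mul, Real.norm_eq_abs (2 ^ (d*n)),
            abs_of_pos (by positivity : (0:ℝ) < (2:ℝ)^(d*n))]
      _ ≤ (2 : ℝ) ^ (d * n) * (Cχ / ((2 : ℝ) ^ n * ε) ^ (d + 1)) * Cg := by
          apply mul_le_mul
          · exact mul_le_mul_of_nonneg_left hχle (by positivity)
          · exact hCg x
          · exact norm_nonneg _
          · positivity
  have hKlim : Filter.Tendsto
      (fun n : ℕ => ∫ x in Uᶜ, (2 : ℝ) ^ (d * n) * χhat ((2 : ℝ) ^ n • F x) * G x)
      Filter.atTop (nhds 0) := by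
    apply squeeze_zero_norm hKbound
    have hBeq : ∀ n : ℕ, (2 : ℝ) ^ (d * n) * (Cχ / ((2 : ℝ) ^ n * ε) ^ (d + 1)) * Cg * M
        = (Cχ / ε ^ (d + 1) * Cg * M) * ((1 : ℝ) / 2) ^ n := by
      intro n
      have h2 : ((2 : ℝ) ^ n * ε) ^ (d + 1) = (2 : ℝ) ^ (n * (d + 1)) * ε ^ (d + 1) := by
        rw [mul_pow, pow_mul]
      rw [h2]
      have h3 : (2 : ℝ) ^ (n * (d + 1)) = (2 : ℝ) ^ (d * n) * (2 : ℝ) ^ n := by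
        rw [← pow_add]
        ring_nf
      rw [h3]
      have ha : ((2 : ℝ) ^ (d * n)) ≠ 0 := by positivity
      rw [mul_assoc ((2 : ℝ) ^ (d * n)) ((2 : ℝ) ^ n) (ε ^ (d + 1)),
        ← mul_div_assoc, mul_div_mul_left _ _ ha]
      rw [div_pow, one_pow, div_mul_eq_div_div_swap, div_div]
      ring
    rw [funext hBeq]
    rw [show (0:ℝ) = (Cχ / ε ^ (d + 1) * Cg * M) * 0 by ring]
    exact (tendsto_pow_atTop_nhds_zero_of_lt_one (by norm_num) (by norm_num)).const_mul _
  -- Assembly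
  have hsplit : (fun n : ℕ => ∫ x, (2 : ℝ) ^ (d * n) * χhat ((2 : ℝ) ^ n • (𝓣 x - x)) * G x)
      = fun n : ℕ => (∫ x in U, (2 : ℝ) ^ (d * n) * χhat ((2 : ℝ) ^ n • F x) * G x)
        + ∫ x in Uᶜ, (2 : ℝ) ^ (d * n) * χhat ((2 : ℝ) ^ n • F x) * G x := by
    funext n
    exact (integral_add_compl measurableSet_ball (hint n)).symm
  rw [hsplit]
  have hJ : Filter.Tendsto
      (fun n : ℕ => ∫ x in U, (2 : ℝ) ^ (d * n) * χhat ((2 : ℝ) ^ n • F x) * G x)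
      Filter.atTop (nhds (G x₀ / |((1 : EuclideanSpace ℝ (Fin d) →L[ℝ]
        EuclideanSpace ℝ (Fin d)) - D𝓣 x₀).det|)) := by
    have : (fun n : ℕ => ∫ x in U, (2 : ℝ) ^ (d * n) * χhat ((2 : ℝ) ^ n • F x) * G x)
        = fun n : ℕ => ∫ y, χhat y * H (((2 : ℝ) ^ n)⁻¹ • y) := by
      funext n
      rw [stepA n, stepC n]
    rw [this]
    exact stepD
  have := hJ.add hKlim
  rwa [add_zero] at this
end

section
/- Let J ⊆ {1,…,k} and let n(1),…,n(k) ∈ ℤ₊ with n(k+1) := n(1), and σ(1),…,σ(k) ∈ {+,−} with σ(k+1) := σ(1). Let c(+) = p > 0 and c(−) = q < 0, and let r > 1 satisfy p − q < r − 1. Suppose that for i ∉ J, c(σ(i+1))·n(i+1) − c(σ(i))·n(i) ≤ δ_i for given reals δ_i. Then −Σ_{i∈J} (r−1)·max{n(i+1), n(i)} ≤ Σ_{i∉J} (c(σ(i+1))n(i+1) − c(σ(i))n(i)) + (r−p+q−1)·max_{1≤i≤k} n(i), using that Σ_{i=1}^k (c(σ(i+1))n(i+1) − c(σ(i))n(i))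 = 0 (telescoping around the cycle) and that for each i, |c(σ(i+1))n(i+1) − c(σ(i))n(i)| ≤ (p−q)·max{n(i+1), n(i)}. -/
/-- combinatorial estimate (eqn:cn2): for a cyclic sequence of frequency
indices `n(i)` with polarizations `σ(i)`, `c(+) = p > 0`, `c(−) = q < 0`, `p − q < r − 1`,
and `J ⊆ {1,…,k}`,
`−Σ_{i∈J} (r−1) max{n(i+1), n(i)} ≤ Σ_{i∉J} (c(σ(i+1))n(i+1) − c(σ(i))n(i))
+ (r−p+q−1) max_{1≤i≤k} n(i)`. -/
theorem stmt18 (k : ℕ) (hk : 1 ≤ k)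
    (n : ℕ → ℕ) (σ : ℕ → Bool)
    (hcycn : n (k + 1) = n 1) (hcycσ : σ (k + 1) = σ 1)
    (p q r : ℝ) (hp : 0 < p) (hq : q < 0) (hpqr : p - q < r - 1)
    (J : Finset ℕ) (hJ : J ⊆ Finset.Icc 1 k)
    (δ : ℕ → ℝ)
    (hδ : ∀ i ∈ Finset.Icc 1 k \ J,
      (if σ (i + 1) then p else q) * (n (i + 1) : ℝ)
        - (if σ i then p else q) * (n i : ℝ) ≤ δ i) :
    -(∑ i ∈ J, (r - 1) * ((max (n (i + 1)) (n i) : ℕ) : ℝ))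
      ≤ (∑ i ∈ Finset.Icc 1 k \ J,
          ((if σ (i + 1) then p else q) * (n (i + 1) : ℝ)
            - (if σ i then p else q) * (n i : ℝ)))
        + (r - p + q - 1) * (((Finset.Icc 1 k).sup n : ℕ) : ℝ) := by
  set g : ℕ → ℝ := fun i => (if σ i then p else q) * (n i : ℝ) with hg
  set f : ℕ → ℝ := fun i => g (i + 1) - g i with hf
  -- telescoping sum over the cycle
  have htel : ∑ i ∈ Finset.Icc 1 k, f i = 0 := by
    have h1 : ∑ i ∈ Finset.Icc 1 k, f i = ∑ j ∈ Finset.range k, f (j + 1) := by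
      rw [show Finset.Icc 1 k = Finset.Ico 1 (k + 1) from rfl,
        Finset.sum_Ico_eq_sum_range]
      simp [add_comm]
    have h2 : ∑ j ∈ Finset.range k, (g (j + 1 + 1) - g (j + 1)) = g (k + 1) - g 1 :=
      Finset.sum_range_sub (fun j => g (j + 1)) k
    rw [h1]
    simp only [hf] at h2 ⊢
    rw [h2, hg]
    simp [hcycn, hcycσ]
  have hsplit : ∑ i ∈ Finset.Icc 1 k \ J, f i = - ∑ i ∈ J, f i := by
    have := Finset.sum_sdiff (f := f) hJ
    linarith [this, htel]
  rw [show (∑ i ∈ Finset.Icc 1 k \ J,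
          ((if σ (i + 1) then p else q) * (n (i + 1) : ℝ)
            - (if σ i then p else q) * (n i : ℝ))) = ∑ i ∈ Finset.Icc 1 k \ J, f i from rfl,
    hsplit]
  -- it suffices that ∑ J f i ≤ ∑ J (r-1) max + (r-p+q-1) * N
  have hN : (0:ℝ) ≤ (((Finset.Icc 1 k).sup n : ℕ) : ℝ) := Nat.cast_nonneg _
  have hterm : ∀ i ∈ J, f i ≤ (r - 1) * ((max (n (i + 1)) (n i) : ℕ) : ℝ) := by
    intro i _
    have hmax1 : (n (i+1) : ℝ) ≤ ((max (n (i + 1)) (n i) : ℕ) : ℝ) := by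
      exact_mod_cast le_max_left _ _
    have hmax2 : (n i : ℝ) ≤ ((max (n (i + 1)) (n i) : ℕ) : ℝ) := by
      exact_mod_cast le_max_right _ _
    have h1 : g (i + 1) ≤ p * ((max (n (i + 1)) (n i) : ℕ) : ℝ) := by
      simp only [hg]
      split_ifs
      · nlinarith
      · nlinarith [Nat.cast_nonneg (α := ℝ) (n (i+1))]
    have h2 : q * ((max (n (i + 1)) (n i) : ℕ) : ℝ) ≤ g i := by
      simp only [hg]
      split_ifs
      · nlinarith [Nat.cast_nonneg (α := ℝ) (n i)]
      · nlinarith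
    have hM : (0:ℝ) ≤ ((max (n (i + 1)) (n i) : ℕ) : ℝ) := Nat.cast_nonneg _
    simp only [hf]
    nlinarith
  have := Finset.sum_le_sum hterm
  nlinarith
end
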